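/- Suppose (ψ̄, ψσ, ψσ²) is a smooth solution of the IL^(0,1)QG equations on ℝ × [0,W] × ℝ, with all three fields L-periodic in x, the no-normal-flow boundary condition satisfied, and constant wall circulations, i.e. t ↦ ∫₀ᴸ ∂_yψ̄(x,0,t) dx and t ↦ ∫₀ᴸ ∂_yψ̄(x,W,t) dx are constant. Then the volume integral t ↦ ∫₀ᵂ ∫₀ᴸ ψ̄(x,y,t) dx dy is constant in time. -/

import Mathlib

/-- Partial derivative in `x` of a field of `(x, y, t)`. -/
noncomputable def px (f : ℝ → ℝ → ℝ → ℝ) (x y t : ℝ) : ℝ := deriv (fun x' => f x' y t) x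

/-- Partial derivative in `y` of a field of `(x, y, t)`. -/
noncomputable def py (f : ℝ → ℝ → ℝ → ℝ) (x y t : ℝ) : ℝ := deriv (fun y' => f x y' t) y

/-- Partial derivative in `t` of a field of `(x, y, t)`. -/
noncomputable def pt (f : ℝ → ℝ → ℝ → ℝ) (x y t : ℝ) : ℝ := deriv (fun t' => f x y t') t

/-- Second partial derivative in `x`. -/
noncomputable def pxx (f : ℝ → ℝ → ℝ → ℝ) (x y t : ℝ) : ℝ := deriv (fun x' => px f x' y t) x

/-- Second partial derivative in `y`. -/
noncomputable def pyy (f : ℝ → ℝ → ℝ → ℝ) (x y t : ℝ) : ℝ := deriv (fun y' => py f x y' t) y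

/-- Jacobian bracket `{a,b} = ∂ₓa ∂_yb − ∂_ya ∂ₓb` of two fields of `(x, y, t)`. -/
noncomputable def jac (a b : ℝ → ℝ → ℝ → ℝ) (x y t : ℝ) : ℝ :=
  px a x y t * py b x y t - py a x y t * px b x y t

/-- Potential vorticity `ξ̄ = ∇²ψ̄ − R_S⁻²(ψ̄ − ψσ + (2/3)ψσ²) + βy`. -/
noncomputable def xibar (RS β : ℝ) (ψb ψσ ψσ2 : ℝ → ℝ → ℝ → ℝ) (x y t : ℝ) : ℝ :=
  pxx ψb x y t + pyy ψb x y t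
    - (RS ^ 2)⁻¹ * (ψb x y t - ψσ x y t + 2 / 3 * ψσ2 x y t) + β * y

/-- A field of `(x, y, t)` is smooth (infinitely differentiable as a function on `ℝ³`). -/
def Smooth3 (f : ℝ → ℝ → ℝ → ℝ) : Prop :=
  ContDiff ℝ (⊤ : ℕ∞) (fun z : ℝ × ℝ × ℝ => f z.1 z.2.1 z.2.2)

/-- `L`-periodicity in the zonal direction `x`. -/
def PeriodicX (L : ℝ) (f : ℝ → ℝ → ℝ → ℝ) : Prop :=
  ∀ x y t : ℝ, f (x + L) y t = f x y t

/-- The IL⁽⁰'¹⁾QG equations on the channel `ℝ × [0,W] × ℝ`: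
`∂ₜξ̄ + {ψ̄, ξ̄ − R_S⁻²(ψσ − (2/3)ψσ²)} = 0`, `∂ₜψσ + {ψ̄, ψσ} = 0`,
`∂ₜψσ² + {ψ̄, ψσ²} = 0`. -/
def IL01QG (RS β W : ℝ) (ψb ψσ ψσ2 : ℝ → ℝ → ℝ → ℝ) : Prop :=
  ∀ x t : ℝ, ∀ y ∈ Set.Icc (0:ℝ) W,
    pt (xibar RS β ψb ψσ ψσ2) x y t
      + jac ψb (fun x' y' t' => xibar RS β ψb ψσ ψσ2 x' y' t'
          - (RS ^ 2)⁻¹ * (ψσ x' y' t' - 2 / 3 * ψσ2 x' y' t')) x y t = 0 ∧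
    pt ψσ x y t + jac ψb ψσ x y t = 0 ∧
    pt ψσ2 x y t + jac ψb ψσ2 x y t = 0

/-- No-normal-flow boundary condition: `∂ₓψ̄ = 0` on both channel walls. -/
def NoNormalFlow (W : ℝ) (ψb : ℝ → ℝ → ℝ → ℝ) : Prop :=
  ∀ x t : ℝ, px ψb x 0 t = 0 ∧ px ψb x W t = 0



section helpers
open MeasureTheory intervalIntegral Function

noncomputable def unc (f : ℝ → ℝ → ℝ → ℝ) : ℝ × ℝ × ℝ → ℝ := fun z => f z.1 z.2.1 z.2.2
def ee1 : ℝ × ℝ × ℝ := (1, 0, 0)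
def ee2 : ℝ × ℝ × ℝ := (0, 1, 0)
def ee3 : ℝ × ℝ × ℝ := (0, 0, 1)

variable {f g : ℝ → ℝ → ℝ → ℝ} {x y t : ℝ}

lemma S3.diff (hf : Smooth3 f) : Differentiable ℝ (unc f) := hf.differentiable (by norm_num)

lemma hdX (hf : Smooth3 f) (x y t : ℝ) :
    HasDerivAt (fun x' => f x' y t) (fderiv ℝ (unc f) (x, y, t) ee1) x := by
  have h1 : HasDerivAt (fun x' : ℝ => ((x', y, t) : ℝ × ℝ × ℝ)) ee1 x :=
    HasDerivAt.prodMk (hasDerivAt_id x) (HasDerivAt.prodMk (hasDerivAt_const x y) (hasDerivAt_const x t))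
  exact (S3.diff hf (x, y, t)).hasFDerivAt.comp_hasDerivAt x h1

lemma hdY (hf : Smooth3 f) (x y t : ℝ) :
    HasDerivAt (fun y' => f x y' t) (fderiv ℝ (unc f) (x, y, t) ee2) y := by
  have h1 : HasDerivAt (fun y' : ℝ => ((x, y', t) : ℝ × ℝ × ℝ)) ee2 y :=
    HasDerivAt.prodMk (hasDerivAt_const y x) (HasDerivAt.prodMk (hasDerivAt_id y) (hasDerivAt_const y t))
  exact (S3.diff hf (x, y, t)).hasFDerivAt.comp_hasDerivAt y h1

lemma hdT (hf : Smooth3 f) (x y t : ℝ) :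
    HasDerivAt (fun t' => f x y t') (fderiv ℝ (unc f) (x, y, t) ee3) t := by
  have h1 : HasDerivAt (fun t' : ℝ => ((x, y, t') : ℝ × ℝ × ℝ)) ee3 t :=
    HasDerivAt.prodMk (hasDerivAt_const t x) (HasDerivAt.prodMk (hasDerivAt_const t y) (hasDerivAt_id t))
  exact (S3.diff hf (x, y, t)).hasFDerivAt.comp_hasDerivAt t h1

lemma px_eq (hf : Smooth3 f) : px f x y t = fderiv ℝ (unc f) (x, y, t) ee1 := (hdX hf x y t).deriv
lemma py_eq (hf : Smooth3 f) : py f x y t = fderiv ℝ (unc f) (x, y, t) ee2 := (hdY hf x y t).deriv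
lemma pt_eq (hf : Smooth3 f) : pt f x y t = fderiv ℝ (unc f) (x, y, t) ee3 := (hdT hf x y t).deriv

lemma hd_px (hf : Smooth3 f) : HasDerivAt (fun x' => f x' y t) (px f x y t) x := by
  rw [px_eq hf]; exact hdX hf x y t
lemma hd_py (hf : Smooth3 f) : HasDerivAt (fun y' => f x y' t) (py f x y t) y := by
  rw [py_eq hf]; exact hdY hf x y t
lemma hd_pt (hf : Smooth3 f) : HasDerivAt (fun t' => f x y t') (pt f x y t) t := by
  rw [pt_eq hf]; exact hdT hf x y t

lemma topadd : ((⊤:ℕ∞) : WithTop ℕ∞) + 1 ≤ ((⊤:ℕ∞) : WithTop ℕ∞) := by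
  norm_num

lemma S3px (hf : Smooth3 f) : Smooth3 (px f) := by
  have h : ContDiff ℝ (⊤ : ℕ∞) (fun z : ℝ × ℝ × ℝ => fderiv ℝ (unc f) z ee1) :=
    (hf.fderiv_right topadd).clm_apply contDiff_const
  have he : (fun z : ℝ × ℝ × ℝ => px f z.1 z.2.1 z.2.2) = fun z => fderiv ℝ (unc f) z ee1 := by
    funext z; exact px_eq hf
  rw [Smooth3, he]; exact h

lemma S3py (hf : Smooth3 f) : Smooth3 (py f) := by
  have h : ContDiff ℝ (⊤ : ℕ∞) (fun z : ℝ × ℝ × ℝ => fderiv ℝ (unc f) z ee2) :=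
    (hf.fderiv_right topadd).clm_apply contDiff_const
  have he : (fun z : ℝ × ℝ × ℝ => py f z.1 z.2.1 z.2.2) = fun z => fderiv ℝ (unc f) z ee2 := by
    funext z; exact py_eq hf
  rw [Smooth3, he]; exact h

lemma S3pt (hf : Smooth3 f) : Smooth3 (pt f) := by
  have h : ContDiff ℝ (⊤ : ℕ∞) (fun z : ℝ × ℝ × ℝ => fderiv ℝ (unc f) z ee3) :=
    (hf.fderiv_right topadd).clm_apply contDiff_const
  have he : (fun z : ℝ × ℝ × ℝ => pt f z.1 z.2.1 z.2.2) = fun z => fderiv ℝ (unc f) z ee3 := by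
    funext z; exact pt_eq hf
  rw [Smooth3, he]; exact h

variable {f g a b : ℝ → ℝ → ℝ → ℝ} {x y t L W : ℝ}

-- continuity helper
lemma contOf {α : Type*} [TopologicalSpace α] (hf : Smooth3 f) {u v w : α → ℝ}
    (hu : Continuous u) (hv : Continuous v) (hw : Continuous w) :
    Continuous fun p => f (u p) (v p) (w p) :=
  hf.continuous.comp (hu.prodMk (hv.prodMk hw))

-- smoothness combinators
lemma S3add (hf : Smooth3 f) (hg : Smooth3 g) : Smooth3 (fun x y t => f x y t + g x y t) := hf.add hg
lemma S3sub (hf : Smooth3 f) (hg : Smooth3 g) : Smooth3 (fun x y t => f x y t - g x y t) := hf.sub hg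
lemma S3mul (hf : Smooth3 f) (hg : Smooth3 g) : Smooth3 (fun x y t => f x y t * g x y t) := hf.mul hg
lemma S3cmul (c : ℝ) (hf : Smooth3 f) : Smooth3 (fun x y t => c * f x y t) := contDiff_const.mul hf
lemma S3liny (c : ℝ) : Smooth3 (fun _ y _ => c * y) := by
  have : ContDiff ℝ (⊤:ℕ∞) (fun z : ℝ × ℝ × ℝ => c * z.2.1) :=
    contDiff_const.mul (contDiff_fst.comp contDiff_snd)
  exact this

-- second derivative symmetry
lemma fd2_apply (hf : Smooth3 f) (p v w : ℝ × ℝ × ℝ) :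
    fderiv ℝ (fun z => fderiv ℝ (unc f) z w) p v = fderiv ℝ (fderiv ℝ (unc f)) p v w := by
  have hD : Differentiable ℝ (fderiv ℝ (unc f)) :=
    (hf.fderiv_right topadd).differentiable (by norm_num)
  have h := ((ContinuousLinearMap.apply ℝ ℝ w).hasFDerivAt).comp p (hD p).hasFDerivAt
  have h' : HasFDerivAt (fun z => fderiv ℝ (unc f) z w)
      ((ContinuousLinearMap.apply ℝ ℝ w).comp (fderiv ℝ (fderiv ℝ (unc f)) p)) p := h
  rw [h'.fderiv]; rfl

lemma clairaut (hf : Smooth3 f) (x y t : ℝ) : py (px f) x y t = px (py f) x y t := by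
  have hD : Differentiable ℝ (fderiv ℝ (unc f)) :=
    (hf.fderiv_right topadd).differentiable (by norm_num)
  have hsym := second_derivative_symmetric (f := unc f) (f' := fderiv ℝ (unc f))
      (f'' := fderiv ℝ (fderiv ℝ (unc f)) (x, y, t))
      (fun z => (S3.diff hf z).hasFDerivAt) (hD (x, y, t)).hasFDerivAt
  calc py (px f) x y t = fderiv ℝ (unc (px f)) (x, y, t) ee2 := py_eq (S3px hf)
    _ = fderiv ℝ (fun z => fderiv ℝ (unc f) z ee1) (x, y, t) ee2 := by
        rw [show unc (px f) = fun z => fderiv ℝ (unc f) z ee1 from funext fun z => px_eq hf]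
    _ = fderiv ℝ (fderiv ℝ (unc f)) (x, y, t) ee2 ee1 := fd2_apply hf _ ee2 ee1
    _ = fderiv ℝ (fderiv ℝ (unc f)) (x, y, t) ee1 ee2 := hsym ee2 ee1
    _ = fderiv ℝ (fun z => fderiv ℝ (unc f) z ee2) (x, y, t) ee1 := (fd2_apply hf _ ee1 ee2).symm
    _ = fderiv ℝ (unc (py f)) (x, y, t) ee1 := by
        rw [show unc (py f) = fun z => fderiv ℝ (unc f) z ee2 from funext fun z => py_eq hf]
    _ = px (py f) x y t := (px_eq (S3py hf)).symm

variable {f g a b : ℝ → ℝ → ℝ → ℝ} {x y t L W : ℝ}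

lemma PXpx (hp : PeriodicX L f) : PeriodicX L (px f) := by
  intro x y t
  have h : (fun x' => f (x' + L) y t) = (fun x' => f x' y t) := funext fun x' => hp x' y t
  calc deriv (fun x' => f x' y t) (x + L)
      = deriv (fun x' => f (x' + L) y t) x := (deriv_comp_add_const (fun x' => f x' y t) L x).symm
    _ = deriv (fun x' => f x' y t) x := by rw [h]

lemma PXpy (hp : PeriodicX L f) : PeriodicX L (py f) := by
  intro x y t
  show deriv (fun y' => f (x + L) y' t) y = deriv (fun y' => f x y' t) y
  congr 1; funext y'; exact hp x y' t

lemma PXpt (hp : PeriodicX L f) : PeriodicX L (pt f) := by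
  intro x y t
  show deriv (fun t' => f (x + L) y t') t = deriv (fun t' => f x y t') t
  congr 1; funext t'; exact hp x y t'

lemma PX_LR (hp : PeriodicX L f) : f L y t = f 0 y t := by simpa using hp 0 y t

-- interval integrability of curves
lemma iiX (hf : Smooth3 f) (y t a b : ℝ) : IntervalIntegrable (fun x => f x y t) volume a b :=
  (contOf hf continuous_id continuous_const continuous_const).intervalIntegrable a b
lemma iiY (hf : Smooth3 f) (x t a b : ℝ) : IntervalIntegrable (fun y => f x y t) volume a b :=
  (contOf hf continuous_const continuous_id continuous_const).intervalIntegrable a b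
lemma iiT (hf : Smooth3 f) (x y a b : ℝ) : IntervalIntegrable (fun t => f x y t) volume a b :=
  (contOf hf continuous_const continuous_const continuous_id).intervalIntegrable a b

-- FTC lemmas
lemma ftcX (hf : Smooth3 f) (y t a b : ℝ) : (∫ x in a..b, px f x y t) = f b y t - f a y t :=
  integral_eq_sub_of_hasDerivAt (fun x _ => hd_px hf) (iiX (S3px hf) y t a b)
lemma ftcY (hf : Smooth3 f) (x t a b : ℝ) : (∫ y in a..b, py f x y t) = f x b t - f x a t :=
  integral_eq_sub_of_hasDerivAt (fun y _ => hd_py hf) (iiY (S3py hf) x t a b)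
lemma ftcT (hf : Smooth3 f) (x y a b : ℝ) : (∫ t in a..b, pt f x y t) = f x y b - f x y a :=
  integral_eq_sub_of_hasDerivAt (fun t _ => hd_pt hf) (iiT (S3pt hf) x y a b)

-- Fubini swap for continuous integrands on ordered rectangles
lemma swapInt {F : ℝ → ℝ → ℝ} (hF : Continuous (uncurry F)) {a b c d : ℝ}
    (hab : a ≤ b) (hcd : c ≤ d) :
    (∫ u in a..b, ∫ v in c..d, F u v) = ∫ v in c..d, ∫ u in a..b, F u v := by
  simp_rw [intervalIntegral.integral_of_le hab, intervalIntegral.integral_of_le hcd]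
  apply MeasureTheory.integral_integral_swap
  rw [Measure.prod_restrict]
  have h1 : IntegrableOn (uncurry F) (Set.Icc a b ×ˢ Set.Icc c d) (volume.prod volume) := by
    rw [← Measure.volume_eq_prod]
    exact hF.continuousOn.integrableOn_compact (isCompact_Icc.prod isCompact_Icc)
  exact h1.mono_set (Set.prod_mono Set.Ioc_subset_Icc_self Set.Ioc_subset_Icc_self)

lemma contX (hf : Smooth3 f) (y t : ℝ) : Continuous (fun x => f x y t) :=
  contOf hf continuous_id continuous_const continuous_const
lemma contY (hf : Smooth3 f) (x t : ℝ) : Continuous (fun y => f x y t) :=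
  contOf hf continuous_const continuous_id continuous_const
lemma contT (hf : Smooth3 f) (x y : ℝ) : Continuous (fun t => f x y t) :=
  contOf hf continuous_const continuous_const continuous_id

variable {f g a b : ℝ → ℝ → ℝ → ℝ} {x y t L W : ℝ}

/-- The double integral of the Jacobian vanishes given periodicity and no-normal-flow. -/
lemma jac_int_zero (ha : Smooth3 a) (hb : Smooth3 b)
    (hpa : PeriodicX L a) (hpb : PeriodicX L b) (hL : 0 ≤ L) (hW : 0 ≤ W)
    (hbc : ∀ x t : ℝ, px a x 0 t = 0 ∧ px a x W t = 0) (t : ℝ) :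
    (∫ y in (0:ℝ)..W, ∫ x in (0:ℝ)..L, jac a b x y t) = 0 := by
  set E1 : ℝ → ℝ → ℝ → ℝ := fun x y t => py b x y t * px a x y t + b x y t * py (px a) x y t
    with hE1def
  set E2 : ℝ → ℝ → ℝ → ℝ := fun x y t => px b x y t * py a x y t + b x y t * px (py a) x y t
    with hE2def
  have hE1s : Smooth3 E1 := S3add (S3mul (S3py hb) (S3px ha)) (S3mul hb (S3py (S3px ha)))
  have hE2s : Smooth3 E2 := S3add (S3mul (S3px hb) (S3py ha)) (S3mul hb (S3px (S3py ha)))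
  -- inner integral of jac equals inner integral of E1
  have step1 : ∀ y t : ℝ, (∫ x in (0:ℝ)..L, jac a b x y t) = ∫ x in (0:ℝ)..L, E1 x y t := by
    intro y t
    have hE2int : (∫ x in (0:ℝ)..L, E2 x y t) = 0 := by
      have := integral_eq_sub_of_hasDerivAt
        (f := fun x => b x y t * py a x y t) (f' := fun x => E2 x y t) (a := 0) (b := L)
        (fun x _ => (hd_px hb).mul (hd_px (S3py ha))) (iiX hE2s y t 0 L)
      rw [this]
      rw [PX_LR hpb, PX_LR (PXpy hpa)]
      ring
    have hptwise : ∀ x, jac a b x y t = E1 x y t - E2 x y t := by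
      intro x
      simp only [hE1def, hE2def, jac]
      rw [← clairaut ha x y t]; ring
    rw [intervalIntegral.integral_congr (fun x _ => hptwise x),
      intervalIntegral.integral_sub (iiX hE1s y t 0 L) (iiX hE2s y t 0 L), hE2int, sub_zero]
  rw [intervalIntegral.integral_congr (fun y _ => step1 y t)]
  -- swap and integrate E1 in y
  have hswap := swapInt (F := fun y x => E1 x y t)
    (contOf hE1s continuous_snd continuous_fst continuous_const) hW hL
  rw [hswap]
  have hinner : ∀ x : ℝ, (∫ y in (0:ℝ)..W, E1 x y t) = 0 := by
    intro x
    have := integral_eq_sub_of_hasDerivAt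
      (f := fun y => b x y t * px a x y t) (f' := fun y => E1 x y t) (a := 0) (b := W)
      (fun y _ => (hd_py hb).mul (hd_py (S3px ha))) (iiY hE1s x t 0 W)
    rw [this]
    rw [(hbc x t).1, (hbc x t).2]
    ring
  rw [intervalIntegral.integral_congr (fun x _ => hinner x)]
  simp

variable {h : ℝ → ℝ → ℝ → ℝ} {L W : ℝ}

/-- If the double integral of `∂ₜh` vanishes for all times, the double integral of `h`
is conserved. -/
lemma const_in_time (h : ℝ → ℝ → ℝ → ℝ) (hh : Smooth3 h)
    (hL : 0 ≤ L) (hW : 0 ≤ W) {t₁ t₂ : ℝ} (ht : t₁ ≤ t₂)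
    (hzero : ∀ t : ℝ, (∫ y in (0:ℝ)..W, ∫ x in (0:ℝ)..L, pt h x y t) = 0) :
    (∫ y in (0:ℝ)..W, ∫ x in (0:ℝ)..L, h x y t₁)
      = ∫ y in (0:ℝ)..W, ∫ x in (0:ℝ)..L, h x y t₂ := by
  have hcont2 : ∀ t : ℝ, Continuous fun y => ∫ x in (0:ℝ)..L, h x y t := by
    intro t
    exact continuous_parametric_intervalIntegral_of_continuous'
      (f := fun y x => h x y t) (contOf hh continuous_snd continuous_fst continuous_const) 0 L
  have hG : Continuous fun p : ℝ × ℝ => ∫ x in (0:ℝ)..L, pt h x p.1 p.2 := by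
    exact continuous_parametric_intervalIntegral_of_continuous'
      (f := fun (p : ℝ × ℝ) x => pt h x p.1 p.2)
      (contOf (S3pt hh) continuous_snd (continuous_fst.comp continuous_fst)
        (continuous_snd.comp continuous_fst)) 0 L
  have step1 : ∀ y : ℝ, (∫ x in (0:ℝ)..L, h x y t₂) - (∫ x in (0:ℝ)..L, h x y t₁)
      = ∫ t in t₁..t₂, ∫ x in (0:ℝ)..L, pt h x y t := by
    intro y
    have hsw := swapInt (F := fun x t => pt h x y t)
      (contOf (S3pt hh) continuous_fst continuous_const continuous_snd) hL ht
    rw [← hsw, ← intervalIntegral.integral_sub (iiX hh y t₂ 0 L) (iiX hh y t₁ 0 L)]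
    apply intervalIntegral.integral_congr
    intro x _
    exact (ftcT hh x y t₁ t₂).symm
  have main : (∫ y in (0:ℝ)..W, ∫ x in (0:ℝ)..L, h x y t₂)
      - (∫ y in (0:ℝ)..W, ∫ x in (0:ℝ)..L, h x y t₁) = 0 := by
    rw [← intervalIntegral.integral_sub
      ((hcont2 t₂).intervalIntegrable 0 W) ((hcont2 t₁).intervalIntegrable 0 W)]
    rw [intervalIntegral.integral_congr (fun y _ => step1 y)]
    have hsw2 := swapInt (F := fun y t => ∫ x in (0:ℝ)..L, pt h x y t)
      hG hW ht
    rw [hsw2, intervalIntegral.integral_congr (fun t _ => hzero t)]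
    simp
  linarith

lemma pxx_eq (f : ℝ → ℝ → ℝ → ℝ) : pxx f = px (px f) := rfl
lemma pyy_eq (f : ℝ → ℝ → ℝ → ℝ) : pyy f = py (py f) := rfl

lemma contParamY {f : ℝ → ℝ → ℝ → ℝ} (hf : Smooth3 f) (a b t : ℝ) :
    Continuous fun y => ∫ x in a..b, f x y t :=
  continuous_parametric_intervalIntegral_of_continuous'
    (f := fun y x => f x y t) (contOf hf continuous_snd continuous_fst continuous_const) a b

section main

variable {L W β RS : ℝ} {ψb ψσ ψσ2 : ℝ → ℝ → ℝ → ℝ}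

lemma expansion (hL : 0 ≤ L) (hW : 0 ≤ W)
    (hψb : Smooth3 ψb) (hψσ : Smooth3 ψσ) (hψσ2 : Smooth3 ψσ2)
    (hperb : PeriodicX L ψb) (t : ℝ) :
    (∫ y in (0:ℝ)..W, ∫ x in (0:ℝ)..L, xibar RS β ψb ψσ ψσ2 x y t)
      = ((∫ x in (0:ℝ)..L, py ψb x W t) - (∫ x in (0:ℝ)..L, py ψb x 0 t))
        - (RS ^ 2)⁻¹ * ((∫ y in (0:ℝ)..W, ∫ x in (0:ℝ)..L, ψb x y t)
            - (∫ y in (0:ℝ)..W, ∫ x in (0:ℝ)..L, ψσ x y t)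
            + 2 / 3 * (∫ y in (0:ℝ)..W, ∫ x in (0:ℝ)..L, ψσ2 x y t))
        + (∫ y in (0:ℝ)..W, L * (β * y)) := by
  set c : ℝ := (RS ^ 2)⁻¹ with hc
  -- inner expansion
  have hinner : ∀ y : ℝ, (∫ x in (0:ℝ)..L, xibar RS β ψb ψσ ψσ2 x y t)
      = (∫ x in (0:ℝ)..L, pyy ψb x y t)
        - c * ((∫ x in (0:ℝ)..L, ψb x y t) - (∫ x in (0:ℝ)..L, ψσ x y t)
          + 2 / 3 * (∫ x in (0:ℝ)..L, ψσ2 x y t)) + L * (β * y) := by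
    intro y
    have i1 : IntervalIntegrable (fun x => pxx ψb x y t + pyy ψb x y t
        - c * (ψb x y t - ψσ x y t + 2 / 3 * ψσ2 x y t)) volume 0 L :=
      iiX (S3sub (S3add (S3px (S3px hψb)) (S3py (S3py hψb)))
        (S3cmul c (S3add (S3sub hψb hψσ) (S3cmul (2/3) hψσ2)))) y t 0 L
    have e1 : (∫ x in (0:ℝ)..L, xibar RS β ψb ψσ ψσ2 x y t)
        = (∫ x in (0:ℝ)..L, (pxx ψb x y t + pyy ψb x y t
            - c * (ψb x y t - ψσ x y t + 2 / 3 * ψσ2 x y t)))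
          + ∫ _x in (0:ℝ)..L, β * y :=
      intervalIntegral.integral_add i1 intervalIntegrable_const
    have e2 : (∫ x in (0:ℝ)..L, (pxx ψb x y t + pyy ψb x y t
          - c * (ψb x y t - ψσ x y t + 2 / 3 * ψσ2 x y t)))
        = (∫ x in (0:ℝ)..L, (pxx ψb x y t + pyy ψb x y t))
          - ∫ x in (0:ℝ)..L, c * (ψb x y t - ψσ x y t + 2 / 3 * ψσ2 x y t) :=
      intervalIntegral.integral_sub
        (iiX (S3add (S3px (S3px hψb)) (S3py (S3py hψb))) y t 0 L)
        (iiX (S3cmul c (S3add (S3sub hψb hψσ) (S3cmul (2/3) hψσ2))) y t 0 L)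
    have e3 : (∫ x in (0:ℝ)..L, (pxx ψb x y t + pyy ψb x y t))
        = (∫ x in (0:ℝ)..L, pxx ψb x y t) + ∫ x in (0:ℝ)..L, pyy ψb x y t :=
      intervalIntegral.integral_add
        (iiX (S3px (S3px hψb)) y t 0 L) (iiX (S3py (S3py hψb)) y t 0 L)
    have e4 : (∫ x in (0:ℝ)..L, pxx ψb x y t) = 0 := by
      have h := ftcX (S3px hψb) y t 0 L
      have h' : (∫ x in (0:ℝ)..L, pxx ψb x y t) = px ψb L y t - px ψb 0 y t := h
      rw [h', PX_LR (PXpx hperb)]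
      ring
    have e5 : (∫ x in (0:ℝ)..L, c * (ψb x y t - ψσ x y t + 2 / 3 * ψσ2 x y t))
        = c * ∫ x in (0:ℝ)..L, (ψb x y t - ψσ x y t + 2 / 3 * ψσ2 x y t) :=
      intervalIntegral.integral_const_mul c _
    have e6 : (∫ x in (0:ℝ)..L, (ψb x y t - ψσ x y t + 2 / 3 * ψσ2 x y t))
        = (∫ x in (0:ℝ)..L, (ψb x y t - ψσ x y t))
          + ∫ x in (0:ℝ)..L, 2 / 3 * ψσ2 x y t :=
      intervalIntegral.integral_add (iiX (S3sub hψb hψσ) y t 0 L)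
        (iiX (S3cmul (2/3) hψσ2) y t 0 L)
    have e7 : (∫ x in (0:ℝ)..L, (ψb x y t - ψσ x y t))
        = (∫ x in (0:ℝ)..L, ψb x y t) - ∫ x in (0:ℝ)..L, ψσ x y t :=
      intervalIntegral.integral_sub (iiX hψb y t 0 L) (iiX hψσ y t 0 L)
    have e8 : (∫ x in (0:ℝ)..L, 2 / 3 * ψσ2 x y t)
        = 2 / 3 * ∫ x in (0:ℝ)..L, ψσ2 x y t := intervalIntegral.integral_const_mul _ _
    have e9 : (∫ _x in (0:ℝ)..L, β * y) = L * (β * y) := by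
      rw [intervalIntegral.integral_const]; simp [smul_eq_mul]
    rw [e1, e2, e3, e4, e5, e6, e7, e8, e9]
    ring
  rw [intervalIntegral.integral_congr (fun y _ => hinner y)]
  -- outer splitting
  have c1 : Continuous fun y => ∫ x in (0:ℝ)..L, pyy ψb x y t := contParamY (S3py (S3py hψb)) 0 L t
  have c2 : Continuous fun y => ∫ x in (0:ℝ)..L, ψb x y t := contParamY hψb 0 L t
  have c3 : Continuous fun y => ∫ x in (0:ℝ)..L, ψσ x y t := contParamY hψσ 0 L t
  have c4 : Continuous fun y => ∫ x in (0:ℝ)..L, ψσ2 x y t := contParamY hψσ2 0 L t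
  have o1 : (∫ y in (0:ℝ)..W, ((∫ x in (0:ℝ)..L, pyy ψb x y t)
        - c * ((∫ x in (0:ℝ)..L, ψb x y t) - (∫ x in (0:ℝ)..L, ψσ x y t)
          + 2 / 3 * (∫ x in (0:ℝ)..L, ψσ2 x y t)) + L * (β * y)))
      = (∫ y in (0:ℝ)..W, ((∫ x in (0:ℝ)..L, pyy ψb x y t)
        - c * ((∫ x in (0:ℝ)..L, ψb x y t) - (∫ x in (0:ℝ)..L, ψσ x y t)
          + 2 / 3 * (∫ x in (0:ℝ)..L, ψσ2 x y t))))
        + ∫ y in (0:ℝ)..W, L * (β * y) :=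
    intervalIntegral.integral_add
      ((c1.sub (continuous_const.mul ((c2.sub c3).add
        (continuous_const.mul c4)))).intervalIntegrable 0 W)
      ((continuous_const.mul (continuous_const.mul continuous_id)).intervalIntegrable 0 W)
  have o2 : (∫ y in (0:ℝ)..W, ((∫ x in (0:ℝ)..L, pyy ψb x y t)
        - c * ((∫ x in (0:ℝ)..L, ψb x y t) - (∫ x in (0:ℝ)..L, ψσ x y t)
          + 2 / 3 * (∫ x in (0:ℝ)..L, ψσ2 x y t))))
      = (∫ y in (0:ℝ)..W, ∫ x in (0:ℝ)..L, pyy ψb x y t)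
        - ∫ y in (0:ℝ)..W, c * ((∫ x in (0:ℝ)..L, ψb x y t) - (∫ x in (0:ℝ)..L, ψσ x y t)
          + 2 / 3 * (∫ x in (0:ℝ)..L, ψσ2 x y t)) :=
    intervalIntegral.integral_sub (c1.intervalIntegrable 0 W)
      ((continuous_const.mul ((c2.sub c3).add
        (continuous_const.mul c4))).intervalIntegrable 0 W)
  have o3 : (∫ y in (0:ℝ)..W, c * ((∫ x in (0:ℝ)..L, ψb x y t) - (∫ x in (0:ℝ)..L, ψσ x y t)
          + 2 / 3 * (∫ x in (0:ℝ)..L, ψσ2 x y t)))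
      = c * ∫ y in (0:ℝ)..W, ((∫ x in (0:ℝ)..L, ψb x y t) - (∫ x in (0:ℝ)..L, ψσ x y t)
          + 2 / 3 * (∫ x in (0:ℝ)..L, ψσ2 x y t)) := intervalIntegral.integral_const_mul _ _
  have o4 : (∫ y in (0:ℝ)..W, ((∫ x in (0:ℝ)..L, ψb x y t) - (∫ x in (0:ℝ)..L, ψσ x y t)
          + 2 / 3 * (∫ x in (0:ℝ)..L, ψσ2 x y t)))
      = ((∫ y in (0:ℝ)..W, ((∫ x in (0:ℝ)..L, ψb x y t) - (∫ x in (0:ℝ)..L, ψσ x y t))))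
        + ∫ y in (0:ℝ)..W, 2 / 3 * (∫ x in (0:ℝ)..L, ψσ2 x y t) :=
    intervalIntegral.integral_add ((c2.sub c3).intervalIntegrable 0 W)
      ((continuous_const.mul c4).intervalIntegrable 0 W)
  have o5 : (∫ y in (0:ℝ)..W, ((∫ x in (0:ℝ)..L, ψb x y t) - (∫ x in (0:ℝ)..L, ψσ x y t)))
      = (∫ y in (0:ℝ)..W, ∫ x in (0:ℝ)..L, ψb x y t)
        - ∫ y in (0:ℝ)..W, ∫ x in (0:ℝ)..L, ψσ x y t :=
    intervalIntegral.integral_sub (c2.intervalIntegrable 0 W) (c3.intervalIntegrable 0 W)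
  have o6 : (∫ y in (0:ℝ)..W, 2 / 3 * (∫ x in (0:ℝ)..L, ψσ2 x y t))
      = 2 / 3 * ∫ y in (0:ℝ)..W, ∫ x in (0:ℝ)..L, ψσ2 x y t :=
    intervalIntegral.integral_const_mul _ _
  -- the pyy term
  have hpyy : (∫ y in (0:ℝ)..W, ∫ x in (0:ℝ)..L, pyy ψb x y t)
      = (∫ x in (0:ℝ)..L, py ψb x W t) - (∫ x in (0:ℝ)..L, py ψb x 0 t) := by
    have hsw := swapInt (F := fun y x => pyy ψb x y t)
      (contOf (S3py (S3py hψb)) continuous_snd continuous_fst continuous_const) hW hL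
    rw [hsw]
    have hin : ∀ x : ℝ, (∫ y in (0:ℝ)..W, pyy ψb x y t) = py ψb x W t - py ψb x 0 t :=
      fun x => ftcY (S3py hψb) x t 0 W
    rw [intervalIntegral.integral_congr (fun x _ => hin x)]
    exact intervalIntegral.integral_sub (iiX (S3py hψb) W t 0 L) (iiX (S3py hψb) 0 t 0 L)
  rw [o1, o2, o3, o4, o5, o6, hpyy]
end main


end helpers

/-- Volume conservation: along smooth `x`-periodic solutions of the IL⁽⁰'¹⁾QG
equations with the no-normal-flow boundary condition and constant wall
circulations, the integral `∫∫ ψ̄ dx dy` is constant in time. -/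
theorem volume_conserved
    (L W β RS : ℝ) (hL : 0 < L) (hW : 0 < W) (hRS : 0 < RS)
    (ψb ψσ ψσ2 : ℝ → ℝ → ℝ → ℝ)
    (hψb : Smooth3 ψb) (hψσ : Smooth3 ψσ) (hψσ2 : Smooth3 ψσ2)
    (hperb : PeriodicX L ψb) (hperσ : PeriodicX L ψσ) (hperσ2 : PeriodicX L ψσ2)
    (heqs : IL01QG RS β W ψb ψσ ψσ2)
    (hbc : NoNormalFlow W ψb)
    (hcirc0 : ∀ t₁ t₂ : ℝ,
      (∫ x in (0:ℝ)..L, py ψb x 0 t₁) = ∫ x in (0:ℝ)..L, py ψb x 0 t₂)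
    (hcircW : ∀ t₁ t₂ : ℝ,
      (∫ x in (0:ℝ)..L, py ψb x W t₁) = ∫ x in (0:ℝ)..L, py ψb x W t₂) :
    ∀ t₁ t₂ : ℝ,
      (∫ y in (0:ℝ)..W, ∫ x in (0:ℝ)..L, ψb x y t₁)
        = ∫ y in (0:ℝ)..W, ∫ x in (0:ℝ)..L, ψb x y t₂ := by
  have hL' : (0:ℝ) ≤ L := hL.le
  have hW' : (0:ℝ) ≤ W := hW.le
  set c : ℝ := (RS ^ 2)⁻¹ with hcdef
  have hc : c ≠ 0 := by positivity
  set F : ℝ → ℝ → ℝ → ℝ := fun x' y' t' => xibar RS β ψb ψσ ψσ2 x' y' t'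
      - (RS ^ 2)⁻¹ * (ψσ x' y' t' - 2 / 3 * ψσ2 x' y' t') with hFdef
  -- smoothness
  have hXis : Smooth3 (xibar RS β ψb ψσ ψσ2) := by
    have h : Smooth3 (fun x y t => px (px ψb) x y t + py (py ψb) x y t
        - (RS ^ 2)⁻¹ * (ψb x y t - ψσ x y t + 2 / 3 * ψσ2 x y t) + β * y) :=
      S3add (S3sub (S3add (S3px hψb |> S3px) (S3py hψb |> S3py))
        (S3cmul _ (S3add (S3sub hψb hψσ) (S3cmul _ hψσ2)))) (S3liny β)
    exact h
  have hFs : Smooth3 F :=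
    S3sub hXis (S3cmul _ (S3sub hψσ (S3cmul _ hψσ2)))
  -- periodicity
  have hperxi : PeriodicX L (xibar RS β ψb ψσ ψσ2) := by
    intro x y t
    simp only [xibar, pxx_eq, pyy_eq]
    rw [PXpx (PXpx hperb) x y t, PXpy (PXpy hperb) x y t, hperb x y t,
      hperσ x y t, hperσ2 x y t]
  have hperF : PeriodicX L F := by
    intro x y t
    simp only [hFdef]
    rw [hperxi x y t, hperσ x y t, hperσ2 x y t]
  -- time conservation of the three integrals
  have key : ∀ t₁ t₂ : ℝ, t₁ ≤ t₂ →
      (∫ y in (0:ℝ)..W, ∫ x in (0:ℝ)..L, ψb x y t₁)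
        = ∫ y in (0:ℝ)..W, ∫ x in (0:ℝ)..L, ψb x y t₂ := by
    intro t₁ t₂ ht
    have hA : (∫ y in (0:ℝ)..W, ∫ x in (0:ℝ)..L, ψσ x y t₁)
        = ∫ y in (0:ℝ)..W, ∫ x in (0:ℝ)..L, ψσ x y t₂ := by
      apply const_in_time ψσ hψσ hL' hW' ht
      intro t
      have hcg : ∀ y ∈ Set.uIcc (0:ℝ) W, (∫ x in (0:ℝ)..L, pt ψσ x y t)
          = ∫ x in (0:ℝ)..L, -jac ψb ψσ x y t := by
        intro y hy
        rw [Set.uIcc_of_le hW'] at hy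
        apply intervalIntegral.integral_congr
        intro x _
        simp only []
        have := (heqs x t y hy).2.1
        linarith
      rw [intervalIntegral.integral_congr hcg]
      simp only [intervalIntegral.integral_neg]
      rw [jac_int_zero hψb hψσ hperb hperσ hL' hW' hbc t]
      simp
    have hB : (∫ y in (0:ℝ)..W, ∫ x in (0:ℝ)..L, ψσ2 x y t₁)
        = ∫ y in (0:ℝ)..W, ∫ x in (0:ℝ)..L, ψσ2 x y t₂ := by
      apply const_in_time ψσ2 hψσ2 hL' hW' ht
      intro t
      have hcg : ∀ y ∈ Set.uIcc (0:ℝ) W, (∫ x in (0:ℝ)..L, pt ψσ2 x y t)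
          = ∫ x in (0:ℝ)..L, -jac ψb ψσ2 x y t := by
        intro y hy
        rw [Set.uIcc_of_le hW'] at hy
        apply intervalIntegral.integral_congr
        intro x _
        simp only []
        have := (heqs x t y hy).2.2
        linarith
      rw [intervalIntegral.integral_congr hcg]
      simp only [intervalIntegral.integral_neg]
      rw [jac_int_zero hψb hψσ2 hperb hperσ2 hL' hW' hbc t]
      simp
    have hXi : (∫ y in (0:ℝ)..W, ∫ x in (0:ℝ)..L, xibar RS β ψb ψσ ψσ2 x y t₁)
        = ∫ y in (0:ℝ)..W, ∫ x in (0:ℝ)..L, xibar RS β ψb ψσ ψσ2 x y t₂ := by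
      apply const_in_time _ hXis hL' hW' ht
      intro t
      have hcg : ∀ y ∈ Set.uIcc (0:ℝ) W, (∫ x in (0:ℝ)..L, pt (xibar RS β ψb ψσ ψσ2) x y t)
          = ∫ x in (0:ℝ)..L, -jac ψb F x y t := by
        intro y hy
        rw [Set.uIcc_of_le hW'] at hy
        apply intervalIntegral.integral_congr
        intro x _
        simp only []
        have := (heqs x t y hy).1
        linarith
      rw [intervalIntegral.integral_congr hcg]
      simp only [intervalIntegral.integral_neg]
      rw [jac_int_zero hψb hFs hperb hperF hL' hW' hbc t]
      simp
    have hE1 := expansion (RS := RS) (β := β) hL' hW' hψb hψσ hψσ2 hperb t₁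
    have hE2 := expansion (RS := RS) (β := β) hL' hW' hψb hψσ hψσ2 hperb t₂
    rw [hE1, hE2, hcirc0 t₁ t₂, hcircW t₁ t₂, hA, hB] at hXi
    have hmul : c * (∫ y in (0:ℝ)..W, ∫ x in (0:ℝ)..L, ψb x y t₁)
        = c * ∫ y in (0:ℝ)..W, ∫ x in (0:ℝ)..L, ψb x y t₂ := by
      rw [hcdef]
      linarith
    exact mul_left_cancel₀ hc hmul
  intro t₁ t₂
  rcases le_total t₁ t₂ with h | h
  · exact key t₁ t₂ h
  · exact (key t₂ t₁ h).symm
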